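/- arXiv:2201.08189 — 3 statements merged into one kernel-verified Lean document; each statement's English description precedes it below -/
import Mathlib

section
/- Let n ≥ 1, let D ∈ ℝ^{n×n} be the diagonal matrix with entries λ₁ < λ₂ < ⋯ < λ_n, and let A₁, …, A_N ∈ ℝ^{n×n} be symmetric matrices. Then there exist real diagonal matrices D₁, …, D_N ∈ ℝ^{n×n}, a constant C > 0 and ε₀ > 0 such that for every ε ∈ (0, ε₀] there is a unitary matrix 𝔘 ∈ ℂ^{n×n} with ‖𝔘 − I‖ ≤ C·ε and ‖𝔘·(D + Σ_{j=1}^N ε^j·A_j)·𝔘* − (D + Σ_{j=1}^N ε^j·D_j)‖ ≤ C·ε^{N+1}. -/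
open Matrix

namespace Stmt11

attribute [local instance] Matrix.linftyOpNormedRing Matrix.linftyOpNormedAddCommGroup
  Matrix.linftyOpNormedSpace Matrix.linftyOpNormedAlgebra

open Polynomial Finset

variable {n : ℕ}

noncomputable section

abbrev Mat (n : ℕ) := Matrix (Fin n) (Fin n) ℝ
abbrev MP (n : ℕ) := Matrix (Fin n) (Fin n) (Polynomial ℝ)
def cmap : Mat n →+* MP n := (Polynomial.C (R := ℝ)).mapMatrix
def ccM : MP n →+* Mat n := (Polynomial.constantCoeff (R := ℝ)).mapMatrix
def mxP (lam : Fin n → ℝ) (N : ℕ) (A : ℕ → Mat n) : MP n :=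
  cmap (diagonal lam) + ∑ k ∈ range N, (X : ℝ[X]) ^ (k+1) • cmap (A k)
def lxP (lam : Fin n → ℝ) (N : ℕ) (d : ℕ → Fin n → ℝ) : MP n :=
  cmap (diagonal lam) + ∑ k ∈ range N, (X : ℝ[X]) ^ (k+1) • cmap (diagonal (d k))
def txP (N : ℕ) (T : ℕ → Mat n) : MP n := ∑ k ∈ range N, (X : ℝ[X]) ^ (k+1) • cmap (T k)
def eeP (lam : Fin n → ℝ) (N : ℕ) (A T : ℕ → Mat n) (d : ℕ → Fin n → ℝ) : MP n :=
  (1 + txP N T) * mxP lam N A * (1 - txP N T) - (1 - txP N T) * lxP lam N d * (1 + txP N T)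
@[simp] lemma ccM_cmap (M : Mat n) : ccM (cmap M) = M := by ext i j; simp [ccM, cmap]
@[simp] lemma ccM_Xsmul (k : ℕ) (M : MP n) : ccM ((X : ℝ[X]) ^ (k+1) • M) = 0 := by
  ext i j
  simp only [ccM, RingHom.mapMatrix_apply, Matrix.map_apply, Matrix.smul_apply, smul_eq_mul,
    constantCoeff_apply, Matrix.zero_apply]
  rw [coeff_X_pow_mul']
  simp
@[simp] lemma ccM_txP (N : ℕ) (T : ℕ → Mat n) : ccM (txP N T) = 0 := by
  rw [txP, map_sum]; exact Finset.sum_eq_zero fun k _ => ccM_Xsmul k _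
@[simp] lemma ccM_mxP (lam : Fin n → ℝ) (N : ℕ) (A : ℕ → Mat n) :
    ccM (mxP lam N A) = diagonal lam := by
  rw [mxP, map_add, map_sum, ccM_cmap]; simp
@[simp] lemma ccM_lxP (lam : Fin n → ℝ) (N : ℕ) (d : ℕ → Fin n → ℝ) :
    ccM (lxP lam N d) = diagonal lam := by
  rw [lxP, map_add, map_sum, ccM_cmap]; simp
lemma cmap_transpose (M : Mat n) : (cmap M)ᵀ = cmap Mᵀ := by ext i j; simp [cmap]
lemma txP_transpose {N : ℕ} {T : ℕ → Mat n} (hT : ∀ j, (T j)ᵀ = -T j) :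
    (txP N T)ᵀ = -(txP N T) := by
  simp only [txP, Matrix.transpose_sum, Matrix.transpose_smul, cmap_transpose]
  rw [← Finset.sum_neg_distrib]
  refine Finset.sum_congr rfl fun k _ => ?_
  rw [hT k, map_neg, smul_neg]
lemma mxP_transpose {lam : Fin n → ℝ} {N : ℕ} {A : ℕ → Mat n} (hA : ∀ j, (A j)ᵀ = A j) :
    (mxP lam N A)ᵀ = mxP lam N A := by
  simp only [mxP, Matrix.transpose_add, Matrix.transpose_sum, Matrix.transpose_smul,
    cmap_transpose, Matrix.diagonal_transpose]
  refine congrArg _ (Finset.sum_congr rfl fun k _ => ?_)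
  rw [hA k]
lemma lxP_transpose {lam : Fin n → ℝ} {N : ℕ} {d : ℕ → Fin n → ℝ} :
    (lxP lam N d)ᵀ = lxP lam N d := by
  simp only [lxP, Matrix.transpose_add, Matrix.transpose_sum, Matrix.transpose_smul,
    cmap_transpose, Matrix.diagonal_transpose]
lemma ring_step {R : Type*} [Ring R] (u m l t δ : R) :
    (1+(u+t)) * m * (1-(u+t)) - (1-(u+t)) * (l+δ) * (1+(u+t))
      = ((1+u) * m * (1-u) - (1-u) * l * (1+u))
        + (t*m*(1-u) - (1+u)*m*t - t*m*t
           + t*(l+δ)*(1+(u+t)) - (1-u)*δ*(1+(u+t)) - (1-u)*l*t) := by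
  noncomm_ring

set_option maxHeartbeats 1000000 in
lemma key (lam : Fin n → ℝ) (hlam : StrictMono lam) (N : ℕ) (A : ℕ → Mat n)
    (hA : ∀ j, (A j)ᵀ = A j) :
    ∃ T : ℕ → Mat n, ∃ d : ℕ → (Fin n → ℝ), (∀ j, (T j)ᵀ = -(T j)) ∧
      (∀ k ≤ N, ∀ i j, ((eeP lam N A T d) i j).coeff k = 0) := by
  induction N with
  | zero =>
      refine ⟨fun _ => 0, fun _ => 0, fun j => by simp, ?_⟩
      intro k hk i j
      interval_cases k
      have : eeP (n := n) lam 0 A (fun _ => 0) (fun _ => 0) = 0 := by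
        simp [eeP, txP, mxP, lxP]
      rw [this]; simp
  | succ N ih =>
      obtain ⟨T, d, hskew, hvan⟩ := ih
      set u : MP n := txP N T with hu_def
      set m1 : MP n := mxP lam (N+1) A with hm1_def
      set l1 : MP n := lxP lam N d with hl1_def
      set E1 : MP n := (1 + u) * m1 * (1 - u) - (1 - u) * l1 * (1 + u) with hE1_def
      have hmx : m1 = mxP lam N A + (X : ℝ[X])^(N+1) • cmap (A N) := by
        rw [hm1_def, mxP, Finset.sum_range_succ, ← add_assoc]; rfl
      have hE1E0 : E1 = eeP lam N A T d
          + (X : ℝ[X])^(N+1) • ((1+u) * cmap (A N) * (1-u)) := by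
        rw [hE1_def, hmx, eeP, ← hu_def, ← hl1_def]
        simp only [mul_add, add_mul, mul_smul_comm, smul_mul_assoc]
        abel
      set G : Mat n := Matrix.of (fun i j => (E1 i j).coeff (N+1)) with hG_def
      have hE1symm : E1ᵀ = E1 := by
        have hu : uᵀ = -u := txP_transpose hskew
        have hm : m1ᵀ = m1 := mxP_transpose hA
        have hl : l1ᵀ = l1 := lxP_transpose
        simp only [hE1_def, Matrix.transpose_sub, Matrix.transpose_mul, Matrix.transpose_add,
          Matrix.transpose_one, hu, hm, hl]
        noncomm_ring
      have hGsymm : ∀ i j, G j i = G i j := by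
        intro i j
        have h := congrFun (congrFun (congrArg (fun M => (M : MP n)) hE1symm) i) j
        simp only [Matrix.transpose_apply] at h
        simp only [hG_def, Matrix.of_apply]
        rw [h]
      set dnew : Fin n → ℝ := fun i => G i i with hdnew_def
      set Tnew : Mat n :=
        Matrix.of (fun i j => if i = j then 0 else G i j / (2*(lam i - lam j))) with hTnew_def
      have hTnewskew : Tnewᵀ = -Tnew := by
        ext i j
        simp only [hTnew_def, Matrix.transpose_apply, Matrix.neg_apply, Matrix.of_apply]
        by_cases h : i = j
        · simp [h]
        · rw [if_neg (Ne.symm h), if_neg h, hGsymm i j]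
          have h2 : (2:ℝ)*(lam j - lam i) = -(2*(lam i - lam j)) := by ring
          rw [h2, div_neg]
      set T' : ℕ → Mat n := Function.update T N Tnew with hT'_def
      set d' : ℕ → (Fin n → ℝ) := Function.update d N dnew with hd'_def
      have htx : txP (N+1) T' = u + (X:ℝ[X])^(N+1) • cmap Tnew := by
        rw [hT'_def, txP, Finset.sum_range_succ, hu_def, txP]
        congr 1
        · exact Finset.sum_congr rfl fun k hk => by
            rw [Function.update_of_ne (Nat.ne_of_lt (mem_range.mp hk))]
        · rw [Function.update_self]
      have hlx : lxP lam (N+1) d' = l1 + (X:ℝ[X])^(N+1) • cmap (diagonal dnew) := by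
        rw [hd'_def, lxP, Finset.sum_range_succ, hl1_def, lxP, ← add_assoc]
        congr 1
        · congr 1
          exact Finset.sum_congr rfl fun k hk => by
            rw [Function.update_of_ne (Nat.ne_of_lt (mem_range.mp hk))]
        · rw [Function.update_self]
      set t : MP n := (X:ℝ[X])^(N+1) • cmap Tnew with ht_def
      set δ : MP n := (X:ℝ[X])^(N+1) • cmap (diagonal dnew) with hδ_def
      set W : MP n := cmap Tnew * m1 * (1-u) - (1+u) * m1 * cmap Tnew - cmap Tnew * m1 * t
          + cmap Tnew * (l1 + δ) * (1+(u+t)) - (1-u) * cmap (diagonal dnew) * (1+(u+t))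
          - (1-u) * l1 * cmap Tnew with hW_def
      have h1 : ∀ a b c : MP n, ((X:ℝ[X])^(N+1) • a)*b*c = (X:ℝ[X])^(N+1)•(a*b*c) := by
        intro a b c; rw [smul_mul_assoc, smul_mul_assoc]
      have h2 : ∀ a b c : MP n, a*((X:ℝ[X])^(N+1) • b)*c = (X:ℝ[X])^(N+1)•(a*b*c) := by
        intro a b c; rw [mul_smul_comm, smul_mul_assoc]
      have h3 : ∀ a b : MP n, a*((X:ℝ[X])^(N+1) • b) = (X:ℝ[X])^(N+1)•(a*b) := by
        intro a b; rw [mul_smul_comm]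
      have hEfin : eeP lam (N+1) A T' d' = E1 + (X:ℝ[X])^(N+1) • W := by
        rw [eeP, htx, hlx, ← hm1_def, ring_step u m1 l1 t δ, ← hE1_def]
        refine congrArg (fun x => E1 + x) ?_
        rw [show t*m1*(1-u) = (X:ℝ[X])^(N+1)•(cmap Tnew*m1*(1-u)) from by
              rw [ht_def]; exact h1 _ _ _,
            show (1+u)*m1*t = (X:ℝ[X])^(N+1)•((1+u)*m1*cmap Tnew) from by
              rw [ht_def]; exact h3 _ _,
            show t*m1*t = (X:ℝ[X])^(N+1)•(cmap Tnew*m1*t) from by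
              conv_lhs => rw [ht_def]
              exact h1 _ _ _,
            show t*(l1+δ)*(1+(u+t)) = (X:ℝ[X])^(N+1)•(cmap Tnew*(l1+δ)*(1+(u+t))) from by
              conv_lhs => rw [ht_def]
              exact h1 _ _ _,
            show (1-u)*δ*(1+(u+t)) = (X:ℝ[X])^(N+1)•((1-u)*cmap (diagonal dnew)*(1+(u+t))) from by
              conv_lhs => rw [hδ_def]
              exact h2 _ _ _,
            show (1-u)*l1*t = (X:ℝ[X])^(N+1)•((1-u)*l1*cmap Tnew) from by
              rw [ht_def]; exact h3 _ _]
        rw [← smul_sub, ← smul_sub, ← smul_add, ← smul_sub, ← smul_sub, hW_def]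
      have hccW : ccM W = -G := by
        have e : ccM W = Tnew * diagonal lam * (1-0) - (1+0) * diagonal lam * Tnew
            - Tnew * diagonal lam * 0
            + Tnew * (diagonal lam + 0) * (1+(0+0)) - (1-0) * diagonal dnew * (1+(0+0))
            - (1-0) * diagonal lam * Tnew := by
          rw [hW_def]
          simp only [ht_def, hδ_def, hu_def, hm1_def, hl1_def, map_sub, map_add,
            _root_.map_mul, _root_.map_one, ccM_cmap, ccM_Xsmul, ccM_mxP, ccM_lxP, ccM_txP]
        rw [e]
        ext i j
        by_cases hij : i = j
        · subst hij
          simp [hTnew_def, Matrix.mul_diagonal, Matrix.diagonal_mul, hdnew_def]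
        · have hne : lam i - lam j ≠ 0 := sub_ne_zero.mpr (fun hc => hij (hlam.injective hc))
          simp only [sub_zero, add_zero, mul_one, one_mul, mul_zero]
          simp only [Matrix.sub_apply, Matrix.add_apply, Matrix.neg_apply,
            Matrix.mul_diagonal, Matrix.diagonal_mul, Matrix.diagonal_apply, hTnew_def,
            Matrix.of_apply, if_neg hij]
          field_simp
          ring
      refine ⟨T', d', ?_, ?_⟩
      · intro j
        by_cases hj : j = N
        · subst hj; rw [hT'_def, Function.update_self]; exact hTnewskew
        · rw [hT'_def, Function.update_of_ne hj]; exact hskew j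
      · intro k hk i j
        have hentry : (eeP lam (N+1) A T' d') i j = E1 i j + (X:ℝ[X])^(N+1) * W i j := by
          rw [hEfin]; simp [Matrix.add_apply, Matrix.smul_apply, smul_eq_mul]
        have hE1entry : ∀ k' ≤ N, (E1 i j).coeff k' = 0 := by
          intro k' hk'
          have h0 : E1 i j = (eeP lam N A T d) i j
              + (X:ℝ[X])^(N+1) * ((1+u) * cmap (A N) * (1-u)) i j := by
            rw [hE1E0]; simp [Matrix.add_apply, Matrix.smul_apply, smul_eq_mul]
          rw [h0, coeff_add, hvan k' hk' i j, coeff_X_pow_mul']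
          simp [Nat.not_le.mpr (Nat.lt_succ_of_le hk')]
        rw [hentry, coeff_add]
        rcases Nat.lt_or_ge k (N+1) with hk' | hk'
        · rw [hE1entry k (Nat.lt_succ_iff.mp hk'), coeff_X_pow_mul']
          simp [Nat.not_le.mpr hk']
        · have hkk : k = N+1 := le_antisymm hk hk'
          subst hkk
          rw [coeff_X_pow_mul']
          simp only [le_refl, if_true, Nat.sub_self]
          have hGij : (E1 i j).coeff (N+1) = G i j := by rw [hG_def]; rfl
          have hWij : (W i j).coeff 0 = (ccM W) i j := by
            simp [ccM]
          rw [hGij, hWij, hccW]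
          simp


lemma poly_bound (p : ℝ[X]) (N : ℕ) (hp : ∀ k ≤ N, p.coeff k = 0) (ε : ℝ)
    (h0 : 0 ≤ ε) (h1 : ε ≤ 1) :
    |p.eval ε| ≤ (∑ k ∈ range (p.natDegree + 1), |p.coeff k|) * ε ^ (N+1) := by
  rw [Polynomial.eval_eq_sum_range, Finset.sum_mul]
  refine (Finset.abs_sum_le_sum_abs _ _).trans (Finset.sum_le_sum fun k _ => ?_)
  rcases le_or_gt k N with hk | hk
  · simp [hp k hk]
  · rw [abs_mul, abs_pow, abs_of_nonneg h0]
    refine mul_le_mul_of_nonneg_left ?_ (abs_nonneg _)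
    exact pow_le_pow_of_le_one h0 h1 hk

lemma entry_le_norm (A : Matrix (Fin n) (Fin n) ℂ) (i j : Fin n) : ‖A i j‖ ≤ ‖A‖ := by
  have h1 : ‖A i j‖₊ ≤ ∑ k, ‖A i k‖₊ := Finset.single_le_sum (f := fun k => ‖A i k‖₊) (fun _ _ => zero_le) (mem_univ j)
  have h2 : (∑ k, ‖A i k‖₊) ≤ ‖A‖₊ := by
    rw [Matrix.linfty_opNNNorm_def]
    exact Finset.le_sup (f := fun i => ∑ k, ‖A i k‖₊) (mem_univ i)
  exact_mod_cast h1.trans h2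

lemma norm_le_sum_entries (A : Matrix (Fin n) (Fin n) ℂ) : ‖A‖ ≤ ∑ i, ∑ j, ‖A i j‖ := by
  have : ‖A‖₊ ≤ ∑ i, ∑ j, ‖A i j‖₊ := by
    rw [Matrix.linfty_opNNNorm_def]
    refine Finset.sup_le fun i _ => Finset.single_le_sum (f := fun i => ∑ j, ‖A i j‖₊)
      (fun _ _ => zero_le) (mem_univ i)
  calc ‖A‖ = (‖A‖₊ : ℝ) := (coe_nnnorm _).symm
  _ ≤ ((∑ i, ∑ j, ‖A i j‖₊ : NNReal) : ℝ) := by exact_mod_cast this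
  _ = ∑ i, ∑ j, ‖A i j‖ := by push_cast; rfl

lemma inv_bound (hn : 1 ≤ n) (S : Matrix (Fin n) (Fin n) ℂ) (hS : ‖S‖ ≤ 1/2) :
    IsUnit (1 - S) ∧ ‖(1 - S)⁻¹‖ ≤ 2 := by
  haveI : Nonempty (Fin n) := ⟨⟨0, hn⟩⟩
  have hS1 : ‖S‖ < 1 := lt_of_le_of_lt hS (by norm_num)
  have hU : IsUnit (1 - S) := isUnit_one_sub_of_norm_lt_one hS1
  have hdet : IsUnit (1 - S).det := (Matrix.isUnit_iff_isUnit_det _).mp hU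
  refine ⟨hU, ?_⟩
  have he : (1 - S)⁻¹ = 1 + S * (1 - S)⁻¹ := by
    have h := Matrix.mul_nonsing_inv _ hdet
    rw [Matrix.sub_mul, Matrix.one_mul] at h
    -- h : (1-S)⁻¹ - S * (1-S)⁻¹ = 1
    linear_combination (norm := (rw [sub_eq_iff_eq_add] at h ⊢; try abel_nf)) h
  have hb : ‖(1 - S)⁻¹‖ ≤ 1 + 1/2 * ‖(1 - S)⁻¹‖ := by
    calc ‖(1 - S)⁻¹‖ = ‖1 + S * (1 - S)⁻¹‖ := by rw [← he]
    _ ≤ ‖(1 : Matrix (Fin n) (Fin n) ℂ)‖ + ‖S * (1 - S)⁻¹‖ := norm_add_le _ _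
    _ ≤ 1 + ‖S‖ * ‖(1 - S)⁻¹‖ := by
        rw [norm_one]
        exact add_le_add (le_refl 1) (norm_mul_le _ _)
    _ ≤ 1 + 1/2 * ‖(1 - S)⁻¹‖ := by
        have := norm_nonneg ((1 - S)⁻¹)
        nlinarith
  linarith


def φR : Mat n →+* Matrix (Fin n) (Fin n) ℂ := (Complex.ofRealHom).mapMatrix
def evR (ε : ℝ) : MP n →+* Mat n := (Polynomial.evalRingHom ε).mapMatrix
def ψ (ε : ℝ) : MP n →+* Matrix (Fin n) (Fin n) ℂ := (φR).comp (evR ε)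

lemma φR_conjT (M : Mat n) : (φR M)ᴴ = φR Mᵀ := by
  ext i j
  simp [φR, Matrix.conjTranspose_apply, Complex.conj_ofReal]

lemma evR_smul (ε : ℝ) (k : ℕ) (M : Mat n) :
    evR ε ((X : ℝ[X])^(k+1) • cmap M) = ε^(k+1) • M := by
  ext i j
  simp only [evR, cmap, RingHom.mapMatrix_apply, Matrix.map_apply, Matrix.smul_apply,
    smul_eq_mul, coe_evalRingHom, eval_mul, eval_pow, eval_X, eval_C]

lemma evR_cmap (ε : ℝ) (M : Mat n) : evR ε (cmap M) = M := by
  ext i j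
  simp only [evR, cmap, RingHom.mapMatrix_apply, Matrix.map_apply, coe_evalRingHom, eval_C]

lemma ψ_entry (ε : ℝ) (M : MP n) (i j : Fin n) : ψ ε M i j = (((M i j).eval ε : ℝ) : ℂ) := by
  simp [ψ, φR, evR]



end
end Stmt11

open Polynomial Finset Stmt11

attribute [local instance] Matrix.linftyOpNormedRing Matrix.linftyOpNormedAddCommGroup
  Matrix.linftyOpNormedSpace Matrix.linftyOpNormedAlgebra

set_option maxHeartbeats 1000000 in
theorem stmt11 (n N : ℕ) (hn : 1 ≤ n) (lam : Fin n → ℝ) (hlam : StrictMono lam)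
    (A : Fin N → Matrix (Fin n) (Fin n) ℝ) (hA : ∀ j, (A j).IsSymm) :
    ∃ Dd : Fin N → (Fin n → ℝ), ∃ C > (0 : ℝ), ∃ ε₀ > (0 : ℝ),
      ∀ ε : ℝ, 0 < ε → ε ≤ ε₀ →
        ∃ U : Matrix (Fin n) (Fin n) ℂ,
          U * U.conjTranspose = 1 ∧ U.conjTranspose * U = 1 ∧
          (∀ i k, ‖(U - 1) i k‖ ≤ C * ε) ∧
          (∀ i k,
            ‖(U *
                (Matrix.diagonal lam +
                  ∑ j : Fin N, ε ^ ((j : ℕ) + 1) • A j).map (fun r => (r : ℂ)) *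
                U.conjTranspose -
              (Matrix.diagonal lam +
                  ∑ j : Fin N, ε ^ ((j : ℕ) + 1) • Matrix.diagonal (Dd j)).map
                (fun r => (r : ℂ))) i k‖
            ≤ C * ε ^ (N + 1)) := by
  classical
  set A' : ℕ → Mat n := fun k => if h : k < N then A ⟨k, h⟩ else 0 with hA'_def
  have hA'symm : ∀ j, (A' j)ᵀ = A' j := by
    intro j
    by_cases h : j < N
    · simp only [hA'_def, dif_pos h]; exact hA ⟨j, h⟩
    · simp [hA'_def, dif_neg h]
  obtain ⟨T, d, hskew, hvan⟩ := Stmt11.key lam hlam N A' hA'symm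
  set E := eeP lam N A' T d with hE_def
  set a : ℝ := ∑ k ∈ range N, ‖φR (T k)‖ with ha_def
  set b : ℝ := ∑ i, ∑ j, (∑ k ∈ range ((E i j).natDegree + 1), |(E i j).coeff k|) with hb_def
  have ha0 : 0 ≤ a := Finset.sum_nonneg fun _ _ => norm_nonneg _
  have hb0 : 0 ≤ b := Finset.sum_nonneg fun _ _ => Finset.sum_nonneg fun _ _ =>
    Finset.sum_nonneg fun _ _ => abs_nonneg _
  have hC0 : (0:ℝ) < 8*a + 4*b + 1 := by nlinarith
  have hden : (0:ℝ) < 2*a+2 := by linarith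
  refine ⟨fun j => d (j : ℕ), 8*a + 4*b + 1, hC0, min 1 (1/(2*a+2)),
    lt_min one_pos (by positivity), ?_⟩
  intro ε hε hεe
  have hε1 : ε ≤ 1 := le_trans hεe (min_le_left _ _)
  have hε2 : ε ≤ 1/(2*a+2) := le_trans hεe (min_le_right _ _)
  set Tc := ψ ε (txP N T) with hTc_def
  set Mc := ψ ε (mxP lam N A') with hMc_def
  set Lc := ψ ε (lxP lam N d) with hLc_def
  set Ec := ψ ε E with hEc_def
  have hψs : ∀ (k:ℕ) (M : Mat n), ψ ε ((X:ℝ[X])^(k+1) • cmap M) = (ε^(k+1)) • φR M := by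
    intro k M
    rw [ψ, RingHom.comp_apply, evR_smul]
    ext i j
    simp [φR, Matrix.smul_apply, Complex.real_smul]
  have hTc_sum : Tc = ∑ k ∈ range N, ε^(k+1) • φR (T k) := by
    rw [hTc_def, txP, map_sum]
    exact Finset.sum_congr rfl fun k _ => hψs k _
  have hTc_norm : ‖Tc‖ ≤ ε * a := by
    rw [hTc_sum]
    refine (norm_sum_le _ _).trans ?_
    rw [ha_def, Finset.mul_sum]
    refine Finset.sum_le_sum fun k _ => ?_
    rw [norm_smul, Real.norm_eq_abs, abs_of_nonneg (by positivity)]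
    refine mul_le_mul_of_nonneg_right ?_ (norm_nonneg _)
    calc ε^(k+1) ≤ ε^1 := pow_le_pow_of_le_one hε.le hε1 (by omega)
    _ = ε := pow_one ε
  have hhalf : ‖Tc‖ ≤ 1/2 := by
    refine hTc_norm.trans ?_
    have h1 : ε*a ≤ (1/(2*a+2))*a := mul_le_mul_of_nonneg_right hε2 ha0
    have h2 : (1/(2*a+2))*a ≤ 1/2 := by
      rw [one_div, inv_mul_eq_div, div_le_div_iff₀ hden two_pos]
      linarith
    linarith
  obtain ⟨hQu, hQn⟩ := inv_bound hn Tc hhalf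
  have hPaux := inv_bound hn (-Tc) (by rwa [norm_neg])
  rw [sub_neg_eq_add] at hPaux
  obtain ⟨hPu, hPn⟩ := hPaux
  have hQdet : IsUnit (1 - Tc).det := (Matrix.isUnit_iff_isUnit_det _).mp hQu
  have hPdet : IsUnit (1 + Tc).det := (Matrix.isUnit_iff_isUnit_det _).mp hPu
  have hcT : ∀ M : MP n, (evR ε M)ᵀ = evR ε Mᵀ := by
    intro M; ext i j; simp [evR]
  have hTr : (evR ε (txP N T))ᵀ = -(evR ε (txP N T)) := by
    rw [hcT, Stmt11.txP_transpose hskew, map_neg]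
  have hskewc : Tcᴴ = -Tc := by
    rw [hTc_def, ψ, RingHom.comp_apply, φR_conjT, hTr, map_neg]
  have hQH : (1 - Tc)ᴴ = 1 + Tc := by
    rw [Matrix.conjTranspose_sub, Matrix.conjTranspose_one, hskewc, sub_neg_eq_add]
  have hPH : (1 + Tc)ᴴ = 1 - Tc := by
    rw [Matrix.conjTranspose_add, Matrix.conjTranspose_one, hskewc, ← sub_eq_add_neg]
  set U := (1 - Tc)⁻¹ * (1 + Tc) with hU_def
  have hUH : Uᴴ = (1 - Tc) * (1 + Tc)⁻¹ := by
    rw [hU_def, Matrix.conjTranspose_mul, hPH, Matrix.conjTranspose_nonsing_inv, hQH]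
  have hPQ : (1 + Tc) * (1 - Tc) = (1 - Tc) * (1 + Tc) := by noncomm_ring
  have hUU : U * Uᴴ = 1 := by
    rw [hUH, hU_def]
    have h5 : (1 + Tc) * ((1 - Tc) * (1 + Tc)⁻¹) = 1 - Tc := by
      rw [← Matrix.mul_assoc, hPQ, Matrix.mul_assoc, Matrix.mul_nonsing_inv _ hPdet,
        Matrix.mul_one]
    rw [Matrix.mul_assoc, h5, Matrix.nonsing_inv_mul _ hQdet]
  have hUU2 : Uᴴ * U = 1 := by
    rw [hUH, hU_def]
    have h4 : (1+Tc)⁻¹ * (1-Tc)⁻¹ = (1-Tc)⁻¹ * (1+Tc)⁻¹ := by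
      rw [← Matrix.mul_inv_rev, ← Matrix.mul_inv_rev, hPQ]
    have h5 : (1+Tc)⁻¹ * ((1-Tc)⁻¹ * (1+Tc)) = (1-Tc)⁻¹ := by
      rw [← Matrix.mul_assoc, h4, Matrix.mul_assoc, Matrix.nonsing_inv_mul _ hPdet,
        Matrix.mul_one]
    rw [Matrix.mul_assoc, h5, Matrix.mul_nonsing_inv _ hQdet]
  have hU1 : U - 1 = (1 - Tc)⁻¹ * (Tc + Tc) := by
    rw [hU_def]
    have hinv : ((1 - Tc)⁻¹ : Matrix (Fin n) (Fin n) ℂ) * (1 - Tc) = 1 :=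
      Matrix.nonsing_inv_mul _ hQdet
    calc (1 - Tc)⁻¹ * (1 + Tc) - 1
        = (1 - Tc)⁻¹ * (1 + Tc) - (1 - Tc)⁻¹ * (1 - Tc) := by rw [hinv]
    _ = (1 - Tc)⁻¹ * ((1 + Tc) - (1 - Tc)) := by rw [← Matrix.mul_sub]
    _ = (1 - Tc)⁻¹ * (Tc + Tc) := by congr 1; abel
  have hU1n : ‖U - 1‖ ≤ 4 * (ε * a) := by
    rw [hU1]
    calc ‖(1 - Tc)⁻¹ * (Tc + Tc)‖ ≤ ‖(1 - Tc)⁻¹‖ * ‖Tc + Tc‖ := norm_mul_le _ _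
    _ ≤ 2 * (‖Tc‖ + ‖Tc‖) :=
        mul_le_mul hQn (norm_add_le _ _) (norm_nonneg _) (by norm_num)
    _ ≤ 4 * (ε * a) := by linarith
  have bound1 : ∀ i k, ‖(U - 1) i k‖ ≤ (8*a + 4*b + 1) * ε := by
    intro i k
    refine (entry_le_norm _ i k).trans (hU1n.trans ?_)
    nlinarith
  have hMr : evR ε (mxP lam N A') = diagonal lam + ∑ j : Fin N, ε^((j:ℕ)+1) • A j := by
    rw [mxP, map_add, map_sum]
    congr 1
    · exact evR_cmap ε _
    · rw [← Fin.sum_univ_eq_sum_range (fun k => evR ε ((X:ℝ[X])^(k+1) • cmap (A' k))) N]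
      refine Finset.sum_congr rfl fun j _ => ?_
      rw [evR_smul]
      congr 1
      simp [hA'_def, j.isLt]
  have hLr : evR ε (lxP lam N d)
      = diagonal lam + ∑ j : Fin N, ε^((j:ℕ)+1) • diagonal (d (j:ℕ)) := by
    rw [lxP, map_add, map_sum]
    congr 1
    · exact evR_cmap ε _
    · rw [← Fin.sum_univ_eq_sum_range
        (fun k => evR ε ((X:ℝ[X])^(k+1) • cmap (diagonal (d k)))) N]
      exact Finset.sum_congr rfl fun j _ => by rw [evR_smul]
  have hMc_eq : (Matrix.diagonal lam
      + ∑ j : Fin N, ε ^ ((j:ℕ) + 1) • A j).map (fun r => (r : ℂ)) = Mc := by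
    rw [hMc_def, ψ, RingHom.comp_apply, hMr]; rfl
  have hLc_eq : (Matrix.diagonal lam
      + ∑ j : Fin N, ε ^ ((j:ℕ) + 1) • Matrix.diagonal (d (j:ℕ))).map (fun r => (r : ℂ))
      = Lc := by
    rw [hLc_def, ψ, RingHom.comp_apply, hLr]; rfl
  have hEc_eq : Ec = (1 + Tc) * Mc * (1 - Tc) - (1 - Tc) * Lc * (1 + Tc) := by
    rw [hEc_def, hE_def, eeP]
    simp only [map_sub, map_add, _root_.map_mul, _root_.map_one]
    rfl
  have hEc_norm : ‖Ec‖ ≤ b * ε^(N+1) := by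
    refine (norm_le_sum_entries Ec).trans ?_
    rw [hb_def, Finset.sum_mul]
    refine Finset.sum_le_sum fun i _ => ?_
    rw [Finset.sum_mul]
    refine Finset.sum_le_sum fun j _ => ?_
    rw [hEc_def, ψ_entry]
    rw [Complex.norm_real]
    exact poly_bound _ N (fun k hk => hvan k hk i j) ε hε.le hε1
  have hErr : U * Mc * Uᴴ - Lc = (1 - Tc)⁻¹ * Ec * (1 + Tc)⁻¹ := by
    have c1 : (1-Tc)⁻¹ * ((1-Tc) * Lc * (1+Tc)) * (1+Tc)⁻¹ = Lc := by
      simp only [← Matrix.mul_assoc]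
      rw [Matrix.nonsing_inv_mul _ hQdet, Matrix.one_mul, Matrix.mul_assoc,
        Matrix.mul_nonsing_inv _ hPdet, Matrix.mul_one]
    have c2 : (1-Tc)⁻¹ * ((1+Tc) * Mc * (1-Tc)) * (1+Tc)⁻¹
        = (1-Tc)⁻¹ * (1+Tc) * Mc * ((1-Tc) * (1+Tc)⁻¹) := by
      simp only [← Matrix.mul_assoc]
    rw [hEc_eq, hUH, hU_def]
    conv_rhs => rw [Matrix.mul_sub, Matrix.sub_mul]
    rw [c1, c2]
  have hfn : ‖U * Mc * Uᴴ - Lc‖ ≤ 4 * (b * ε^(N+1)) := by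
    rw [hErr]
    calc ‖(1-Tc)⁻¹ * Ec * (1+Tc)⁻¹‖ ≤ ‖(1-Tc)⁻¹ * Ec‖ * ‖(1+Tc)⁻¹‖ := norm_mul_le _ _
    _ ≤ ‖(1-Tc)⁻¹‖ * ‖Ec‖ * ‖(1+Tc)⁻¹‖ :=
        mul_le_mul_of_nonneg_right (norm_mul_le _ _) (norm_nonneg _)
    _ ≤ 2 * (b * ε^(N+1)) * 2 := by
        refine mul_le_mul (mul_le_mul hQn hEc_norm (norm_nonneg _) (by norm_num)) hPn
          (norm_nonneg _) (by positivity)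
    _ = 4 * (b * ε^(N+1)) := by ring
  refine ⟨U, hUU, hUU2, bound1, ?_⟩
  intro i k
  rw [hMc_eq, hLc_eq]
  refine (entry_le_norm _ i k).trans (hfn.trans ?_)
  have hp : (0:ℝ) < ε^(N+1) := by positivity
  nlinarith
end

section
/- Let ν ≥ 1 and let g : ℝ → ℂ be continuous and compactly supported. Let (h_n) ⊂ (0,1) with h_n → 0 and (γ_n) ⊂ (0,∞) with γ_n → ∞ and γ_n ≤ C·log(1/h_n) for some constant C > 0. Then γ_n · ∫_ℝ |g(t)|² · exp( 2tγ_n − (2t^{ν+1}/((ν+1)h_n))·1_{t≥0}(t) ) dt → |g(0)|²/2 as n → ∞. In particular, if g(0) = 1 and C_h is defined by the normalization ‖C_h·g(t)·exp(tγ_h − (t^{ν+1}/((ν+1)h))·1_{t≥0})‖_{L²(ℝ)} = 1, then C_h^{−2} = 1/(2γ_h) + o(1/γ_h) as h → 0⁺. -/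
open MeasureTheory Real Filter

lemma myIntExpAbs : Integrable (fun s : ℝ => Real.exp (-|s|)) := by
  have h1 : IntegrableOn (fun s : ℝ => Real.exp (-|s|)) (Set.Iic 0) := by
    refine (integrableOn_exp_Iic 0).congr_fun (fun s hs => ?_) measurableSet_Iic
    rw [abs_of_nonpos (Set.mem_Iic.mp hs), neg_neg]
  have h2 : IntegrableOn (fun s : ℝ => Real.exp (-|s|)) (Set.Ioi 0) := by
    refine (exp_neg_integrableOn_Ioi 0 one_pos).congr_fun (fun s hs => ?_) measurableSet_Ioi
    rw [abs_of_pos (Set.mem_Ioi.mp hs)]; simp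
  have := h1.union h2
  rwa [Set.Iic_union_Ioi, integrableOn_univ] at this

lemma myIntExpTwo : ∫ s in Set.Iio (0:ℝ), Real.exp (2*s) = 1/2 := by
  rw [← integral_Iic_eq_integral_Iio]
  have h1 : ∫ s in Set.Iic (0:ℝ), Real.exp (2*s)
      = ∫ s in Set.Ioi (0:ℝ), Real.exp (2 * (-s)) := by
    rw [show ((0:ℝ) = -0) by ring, ← integral_comp_neg_Ioi 0 (fun x => Real.exp (2*x))]
    norm_num
  rw [h1]
  have h2 : (fun s : ℝ => Real.exp (2 * (-s))) = fun s => Real.exp (-(2*s)) := by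
    funext s; ring_nf
  rw [h2]
  have h3 := integral_comp_mul_left_Ioi (fun x : ℝ => Real.exp (-x)) 0 (two_pos (α := ℝ))
  simp only [mul_zero] at h3
  rw [h3, integral_exp_neg_Ioi_zero]
  norm_num

noncomputable def myF (ν : ℝ) (g : ℝ → ℂ) (hn γn : ℝ) (t : ℝ) : ℝ :=
  ‖g t‖ ^ 2 * Real.exp (2 * t * γn - (if 0 ≤ t then 2 * t ^ (ν + 1) / ((ν + 1) * hn) else 0))

lemma myKey (ν : ℝ) (hν : 1 ≤ ν) (g : ℝ → ℂ)
    (hg : Continuous g) (hgsupp : HasCompactSupport g)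
    (h γ : ℕ → ℝ) (C : ℝ) (hC : 0 < C)
    (hh : ∀ n, h n ∈ Set.Ioo (0 : ℝ) 1)
    (hγpos : ∀ n, 0 < γ n)
    (hγtop : Filter.Tendsto γ Filter.atTop Filter.atTop)
    (hγlog : ∀ n, γ n ≤ C * Real.log (1 / h n)) :
    Filter.Tendsto (fun n => γ n * ∫ t : ℝ, myF ν g (h n) (γ n) t)
      Filter.atTop (nhds (‖g 0‖ ^ 2 / 2)) := by
  have hν1 : (0:ℝ) < ν + 1 := by linarith
  obtain ⟨B, hB⟩ := hgsupp.exists_bound_of_continuous hg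
  have hB0 : (0:ℝ) ≤ B := (norm_nonneg (g 0)).trans (hB 0)
  -- h n ≤ exp (-(γ n / C))
  have hhe : ∀ n, h n ≤ Real.exp (-(γ n / C)) := by
    intro n
    have h1 := hγlog n
    rw [one_div, Real.log_inv] at h1
    have h2 : Real.log (h n) ≤ -(γ n / C) := by
      have h3 : γ n / C ≤ -Real.log (h n) := (div_le_iff₀ hC).mpr (by linarith)
      linarith
    calc h n = Real.exp (Real.log (h n)) := (Real.exp_log (hh n).1).symm
    _ ≤ _ := Real.exp_le_exp.mpr h2
  -- γ^{ν+1} h → 0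
  have hdecay : Tendsto (fun n => γ n ^ (ν+1) * h n) atTop (nhds 0) := by
    have base := (tendsto_rpow_mul_exp_neg_mul_atTop_nhds_zero (ν+1) (1/C)
      (by positivity)).comp hγtop
    refine squeeze_zero
      (fun n => mul_nonneg (Real.rpow_nonneg (hγpos n).le _) (hh n).1.le) (fun n => ?_) base
    have : -(1/C) * γ n = -(γ n / C) := by field_simp
    simp only [Function.comp_apply, this]
    exact mul_le_mul_of_nonneg_left (hhe n) (Real.rpow_nonneg (hγpos n).le _)
  have hsmall : ∀ᶠ n in atTop, (ν+1) * (γ n ^ (ν+1) * h n) ≤ 2/3 := by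
    have h1 := hdecay.eventually (eventually_le_nhds (show (0:ℝ) < 2/(3*(ν+1)) by positivity))
    filter_upwards [h1] with n hn
    rw [← le_div_iff₀' hν1]
    convert hn using 1
    field_simp
  -- exp(γ/C)/γ^{ν+1} → ∞
  have hgrow : Tendsto (fun n => Real.exp (γ n / C) / γ n ^ (ν+1)) atTop atTop := by
    have := (tendsto_exp_mul_div_rpow_atTop (ν+1) (1/C) (by positivity)).comp hγtop
    refine this.congr (fun n => ?_)
    simp only [Function.comp_apply, one_div, inv_mul_eq_div]
  -- change of variables
  have hEq : (fun n => γ n * ∫ t : ℝ, myF ν g (h n) (γ n) t)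
      = fun n => ∫ s : ℝ, myF ν g (h n) (γ n) (s / γ n) := by
    funext n
    rw [MeasureTheory.Measure.integral_comp_div (myF ν g (h n) (γ n)) (γ n), smul_eq_mul,
      abs_of_pos (hγpos n)]
  rw [hEq]
  -- limit function
  have hlimint : ∫ s : ℝ, (if s < 0 then ‖g 0‖^2 * Real.exp (2*s) else 0) = ‖g 0‖ ^ 2 / 2 := by
    have hind : (fun s : ℝ => if s < 0 then ‖g 0‖^2 * Real.exp (2*s) else 0)
        = Set.indicator (Set.Iio 0) (fun s => ‖g 0‖^2 * Real.exp (2*s)) := by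
      funext s; simp [Set.indicator_apply, Set.mem_Iio]
    rw [hind, integral_indicator measurableSet_Iio, MeasureTheory.integral_const_mul, myIntExpTwo]
    ring
  rw [← hlimint]
  apply tendsto_integral_filter_of_dominated_convergence
    (bound := fun s => B^2 * Real.exp 3 * Real.exp (-|s|))
  · -- measurability
    apply Filter.Eventually.of_forall
    intro n
    have hfm : Measurable (myF ν g (h n) (γ n)) := by
      apply Measurable.mul
      · exact ((hg.norm.pow 2)).measurable
      · apply Real.measurable_exp.comp
        apply Measurable.sub
        · exact (measurable_id.const_mul 2).mul_const (γ n)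
        · refine Measurable.ite (measurableSet_le measurable_const measurable_id) ?_
            measurable_const
          exact (((Real.continuous_rpow_const hν1.le).measurable.const_mul 2).div_const _)
    exact (hfm.comp (measurable_id.div_const _)).aestronglyMeasurable
  · -- bound
    filter_upwards [hsmall] with n hn
    apply Filter.Eventually.of_forall
    intro s
    have hγn := hγpos n
    have harg : 2 * (s / γ n) * γ n = 2 * s := by
      rw [mul_div_assoc' 2 s (γ n), div_mul_cancel₀ _ (hγpos n).ne']
    have hpen0 : (0:ℝ) ≤ (if 0 ≤ s / γ n then 2 * (s/γ n) ^ (ν + 1) / ((ν + 1) * h n) else 0) := by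
      split_ifs with hcond
      · have := Real.rpow_nonneg hcond (ν+1)
        have := (hh n).1
        positivity
      · exact le_rfl
    have hexp : 2 * (s / γ n) * γ n -
        (if 0 ≤ s / γ n then 2 * (s/γ n) ^ (ν + 1) / ((ν + 1) * h n) else 0) ≤ 3 - |s| := by
      rw [harg]
      rcases le_or_gt s 1 with hs1 | hs1
      · rcases abs_cases s with ⟨he, h0⟩ | ⟨he, h0⟩ <;> linarith
      · have hsp : (0:ℝ) < s := by linarith
        have hcond : (0:ℝ) ≤ s / γ n := by positivity
        rw [if_pos hcond]
        have hdiv : (s / γ n) ^ (ν+1) = s ^ (ν+1) / γ n ^ (ν+1) :=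
          Real.div_rpow hsp.le hγn.le (ν + 1)
        have hsge : s ≤ s ^ (ν+1) := by
          calc s = s ^ (1:ℝ) := (Real.rpow_one s).symm
          _ ≤ s ^ (ν+1) := Real.rpow_le_rpow_of_exponent_le hs1.le (by linarith)
        have hgpos : (0:ℝ) < γ n ^ (ν+1) := Real.rpow_pos_of_pos hγn _
        have hXpos : (0:ℝ) < (ν+1) * (γ n ^ (ν+1) * h n) := by
          have := (hh n).1; positivity
        have hpen_ge : 3 * s ≤ 2 * (s/γ n) ^ (ν+1) / ((ν+1) * h n) := by
          rw [hdiv]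
          have hre : 2 * (s ^ (ν+1) / γ n ^ (ν+1)) / ((ν+1) * h n)
              = 2 * s ^ (ν+1) / ((ν+1) * (γ n ^ (ν+1) * h n)) := by
            rw [mul_div_assoc, div_div]
            ring_nf
          rw [hre, le_div_iff₀ hXpos]
          calc 3*s*((ν+1)*(γ n ^(ν+1)*h n)) ≤ 3*s*(2/3) := by
                apply mul_le_mul_of_nonneg_left hn (by linarith)
          _ = 2*s := by ring
          _ ≤ 2*s^(ν+1) := by linarith
        have habs : |s| = s := abs_of_pos hsp
        linarith
    have hnn : (0:ℝ) ≤ myF ν g (h n) (γ n) (s / γ n) := by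
      unfold myF; positivity
    calc ‖myF ν g (h n) (γ n) (s / γ n)‖ = myF ν g (h n) (γ n) (s / γ n) :=
          Real.norm_of_nonneg hnn
    _ ≤ B^2 * Real.exp (3 - |s|) := by
        unfold myF
        apply mul_le_mul (pow_le_pow_left₀ (norm_nonneg _) (hB _) 2)
          (Real.exp_le_exp.mpr hexp) (Real.exp_nonneg _) (by positivity)
    _ = B^2 * Real.exp 3 * Real.exp (-|s|) := by
        rw [mul_assoc, ← Real.exp_add]; ring_nf
  · exact (myIntExpAbs.const_mul _)
  · -- a.e. limit
    have hae : ∀ᵐ s : ℝ, s ≠ 0 := by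
      rw [MeasureTheory.ae_iff]
      have : {a : ℝ | ¬ a ≠ 0} = {0} := by ext a; simp
      rw [this]
      exact measure_singleton 0
    filter_upwards [hae] with s hs
    have hsd : Tendsto (fun n => s / γ n) atTop (nhds 0) :=
      Tendsto.div_atTop tendsto_const_nhds hγtop
    have hgl : Tendsto (fun n => ‖g (s / γ n)‖^2) atTop (nhds (‖g 0‖^2)) :=
      (((hg.tendsto 0).comp hsd).norm).pow 2
    rcases hs.lt_or_gt with hneg | hpos
    · rw [if_pos hneg]
      refine Tendsto.congr (fun n => ?_) (hgl.mul tendsto_const_nhds)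
      have hc : ¬ (0 ≤ s / γ n) := not_le.mpr (div_neg_of_neg_of_pos hneg (hγpos n))
      unfold myF
      rw [if_neg hc, sub_zero]
      congr 2
      rw [mul_div_assoc' 2 s (γ n), div_mul_cancel₀ _ (hγpos n).ne']
    · rw [if_neg (not_lt.mpr hpos.le)]
      have hcond : ∀ n, (0:ℝ) ≤ s / γ n := fun n => (div_pos hpos (hγpos n)).le
      have hq : Tendsto (fun n => 2 * (s / γ n) ^ (ν+1) / ((ν+1) * h n)) atTop atTop := by
        have c0 : (0:ℝ) < 2 * s ^ (ν+1) / (ν+1) := by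
          have := Real.rpow_pos_of_pos hpos (ν+1); positivity
        have hbase : Tendsto
            (fun n => (2 * s ^(ν+1)/(ν+1)) * (Real.exp (γ n / C) / γ n ^ (ν+1)))
            atTop atTop := hgrow.const_mul_atTop c0
        apply tendsto_atTop_mono ?_ hbase
        intro n
        have hγn := hγpos n
        have hgpos : (0:ℝ) < γ n ^ (ν+1) := Real.rpow_pos_of_pos hγn _
        have hdiv : (s / γ n) ^ (ν+1) = s ^ (ν+1) / γ n ^ (ν+1) :=
          Real.div_rpow hpos.le hγn.le (ν + 1)
        have h1 : Real.exp (γ n / C) ≤ 1 / h n := by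
          rw [le_div_iff₀ (hh n).1]
          calc Real.exp (γ n / C) * h n ≤ Real.exp (γ n / C) * Real.exp (-(γ n / C)) :=
                mul_le_mul_of_nonneg_left (hhe n) (Real.exp_nonneg _)
          _ = 1 := by rw [← Real.exp_add]; simp
        have hh0' : h n ≠ 0 := (hh n).1.ne'
        have hg0' : γ n ^ (ν+1) ≠ 0 := hgpos.ne'
        have hqe : 2 * (s / γ n) ^ (ν+1) / ((ν+1) * h n)
            = (2 * s ^(ν+1)/(ν+1)) * ((1 / h n) / γ n ^ (ν+1)) := by
          rw [hdiv]
          field_simp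
        rw [hqe]
        have hsnn : (0:ℝ) ≤ 2 * s ^(ν+1)/(ν+1) := c0.le
        apply mul_le_mul_of_nonneg_left _ hsnn
        gcongr
      have hexp0 : Tendsto (fun n => B^2 * Real.exp
          (2*s - 2 * (s / γ n) ^ (ν+1) / ((ν+1) * h n))) atTop (nhds 0) := by
        have hbot : Tendsto (fun n => 2*s - 2 * (s / γ n) ^ (ν+1) / ((ν+1) * h n))
            atTop atBot := by
          simp only [sub_eq_add_neg]
          exact tendsto_atBot_add_const_left _ _ (tendsto_neg_atTop_atBot.comp hq)
        have := Real.tendsto_exp_atBot.comp hbot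
        have h2 := this.const_mul (B^2)
        simpa using h2
      apply squeeze_zero (fun n => by unfold myF; positivity) (fun n => ?_) hexp0
      have harg : 2 * (s / γ n) * γ n = 2*s := by
        rw [mul_div_assoc' 2 s (γ n), div_mul_cancel₀ _ (hγpos n).ne']
      unfold myF
      rw [if_pos (hcond n), harg]
      apply mul_le_mul (pow_le_pow_left₀ (norm_nonneg _) (hB _) 2) le_rfl
        (Real.exp_nonneg _) (by positivity)

theorem stmt12 (ν : ℝ) (hν : 1 ≤ ν) (g : ℝ → ℂ)
    (hg : Continuous g) (hgsupp : HasCompactSupport g)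
    (h γ : ℕ → ℝ) (C : ℝ) (hC : 0 < C)
    (hh : ∀ n, h n ∈ Set.Ioo (0 : ℝ) 1)
    (hh0 : Filter.Tendsto h Filter.atTop (nhds 0))
    (hγpos : ∀ n, 0 < γ n)
    (hγtop : Filter.Tendsto γ Filter.atTop Filter.atTop)
    (hγlog : ∀ n, γ n ≤ C * Real.log (1 / h n)) :
    Filter.Tendsto
        (fun n => γ n * ∫ t : ℝ, ‖g t‖ ^ 2 *
          Real.exp (2 * t * γ n -
            (if 0 ≤ t then 2 * t ^ (ν + 1) / ((ν + 1) * h n) else 0)))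
        Filter.atTop (nhds (‖g 0‖ ^ 2 / 2)) ∧
      (g 0 = 1 → ∀ Ch : ℕ → ℝ,
        (∀ n, 0 < Ch n ∧
          (Ch n) ^ 2 * (∫ t : ℝ, ‖g t‖ ^ 2 *
            Real.exp (2 * t * γ n -
              (if 0 ≤ t then 2 * t ^ (ν + 1) / ((ν + 1) * h n) else 0))) = 1) →
        Filter.Tendsto (fun n => γ n / (Ch n) ^ 2) Filter.atTop (nhds (1 / 2))) := by
  have key := myKey ν hν g hg hgsupp h γ C hC hh hγpos hγtop hγlog
  constructor
  · exact key
  · intro hg0 Ch hCh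
    have hfun : (fun n => γ n / Ch n ^ 2)
        = fun n => γ n * ∫ t : ℝ, myF ν g (h n) (γ n) t := by
      funext n
      have hIn : Ch n ^ 2 * (∫ t : ℝ, myF ν g (h n) (γ n) t) = 1 := (hCh n).2
      rw [div_eq_mul_inv, inv_eq_of_mul_eq_one_right hIn]
    rw [hfun]
    have : ‖g 0‖ ^ 2 / 2 = 1 / 2 := by rw [hg0]; norm_num
    rw [← this]
    exact key
end

section
/- Let M > 0 and let W : ℝ → ℝ be continuously differentiable with |W(z)| ≤ M and |W'(z)| ≤ M for all z. Then there exists C = C(M) > 0 such that for every integer n ≥ 1 and every smooth compactly supported w : ℝ → ℂ, writing L_n w := −w'' + n·W(z/√n)²·w, one has √n·‖∂_z( W(z/√n)·w )‖_{L²(ℝ)} + √n·‖W(z/√n)·w'‖_{L²(ℝ)} + ‖w''‖_{L²(ℝ)} + n·‖W(z/√n)²·w‖_{L²(ℝ)} ≤ C·( ‖L_n w‖_{L²(ℝ)} + ‖w‖_{L²(ℝ)} ). -/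
open MeasureTheory Real

private lemma sqrt_add_le'' (x y : ℝ) (hx : 0 ≤ x) (hy : 0 ≤ y) :
    Real.sqrt (x + y) ≤ Real.sqrt x + Real.sqrt y := by
  rw [← Real.sqrt_sq (by positivity : (0:ℝ) ≤ Real.sqrt x + Real.sqrt y)]
  apply Real.sqrt_le_sqrt
  nlinarith [Real.sq_sqrt hx, Real.sq_sqrt hy, Real.sqrt_nonneg x, Real.sqrt_nonneg y]

private lemma hcs_aux {f : ℝ → ℝ} {g g2 : ℝ → ℂ} (hg : HasCompactSupport g)
    (hg2 : HasCompactSupport g2) (h : ∀ z, g z = 0 → g2 z = 0 → f z = 0) :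
    HasCompactSupport f := by
  apply HasCompactSupport.intro (hg.union hg2)
  intro x hx
  simp only [Set.mem_union] at hx
  push_neg at hx
  exact h x (image_eq_zero_of_notMem_tsupport hx.1) (image_eq_zero_of_notMem_tsupport hx.2)

private lemma integ_aux {f : ℝ → ℝ} {g g2 : ℝ → ℂ} (hf : Continuous f)
    (hg : HasCompactSupport g) (hg2 : HasCompactSupport g2)
    (h : ∀ z, g z = 0 → g2 z = 0 → f z = 0) : Integrable f :=
  hf.integrable_of_hasCompactSupport (hcs_aux hg hg2 h)

private lemma norm_expand' (a b : ℂ) (V : ℝ) :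
    ‖-a + (V:ℂ)*b‖^2 = ‖a‖^2 + (V^2*‖b‖^2 + (-2)*(V*(a * (starRingEnd ℂ) b).re)) := by
  simp only [Complex.sq_norm]
  simp [Complex.normSq_apply, Complex.mul_re, Complex.mul_im]
  ring

private lemma norm_ofReal_mul_sq (r : ℝ) (b : ℂ) : ‖(r:ℂ)*b‖^2 = r^2*‖b‖^2 := by
  simp [norm_mul, mul_pow, Complex.normSq_ofReal]

private lemma ptwise_bound {s a b r u v M : ℝ} (hs : 0 < s) (hM : 0 < M)
    (h1 : |b| ≤ M) (h2 : |r| ≤ u * v) (hu : 0 ≤ u) (hv : 0 ≤ v) :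
    (-2) * ((s^2) * (2 * a ^ 1 * (b * (1/s)))) * r ≤ s^2 * a^2 * u^2 + (2*M)^2 * v^2 := by
  have lhs_eq : (-2) * ((s^2) * (2 * a ^ 1 * (b * (1/s)))) * r = -(4*s*a*b*r) := by
    field_simp
    ring
  have habs : |4*s*a*b*r| = 4*s*|a| * |b| * |r| := by
    rw [abs_mul, abs_mul, abs_mul, abs_of_nonneg (by positivity : (0:ℝ) ≤ 4*s)]
  have p1 : |b| * |r| ≤ M * (u*v) := mul_le_mul h1 h2 (abs_nonneg _) hM.le
  have p2 : s*|a| * (|b| * |r|) ≤ s*|a| * (M*(u*v)) := mul_le_mul_of_nonneg_left p1 (by positivity)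
  have p3 : -(4*s*a*b*r) ≤ 4*(s*|a| * (M*(u*v))) := by
    have := neg_abs_le (4*s*a*b*r)
    nlinarith [p2]
  have p4 : 4*(s*|a| * (M*(u*v))) ≤ s^2*a^2*u^2 + (2*M)^2*v^2 := by
    rw [show s^2*a^2*u^2 = (s*|a| *u)^2 by rw [mul_pow, mul_pow, sq_abs],
      show (2*M)^2*v^2 = (2*M*v)^2 by ring]
    nlinarith [sq_nonneg (s*|a| *u - 2*M*v)]
  linarith [lhs_eq.le, lhs_eq.ge, p3, p4]

private lemma norm_add_sq_le' (a b : ℂ) : ‖a + b‖^2 ≤ 2*‖a‖^2 + 2*‖b‖^2 := by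
  have h := norm_add_le a b
  nlinarith [norm_nonneg (a+b), norm_nonneg a, norm_nonneg b, sq_nonneg (‖a‖-‖b‖)]

private lemma sqrt_bd {X F N M : ℝ} (hM : 0 ≤ M) (hN : 0 ≤ N)
    (hX : X ≤ F + (2*M)^2*N) (hF : 0 ≤ F) : Real.sqrt X ≤ Real.sqrt F + 2*M*Real.sqrt N := by
  calc Real.sqrt X ≤ Real.sqrt (F + (2*M)^2*N) := Real.sqrt_le_sqrt hX
    _ ≤ Real.sqrt F + Real.sqrt ((2*M)^2*N) := sqrt_add_le'' _ _ hF (by positivity)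
    _ = Real.sqrt F + 2*M*Real.sqrt N := by
        rw [Real.sqrt_mul (by positivity), Real.sqrt_sq (by positivity)]

private lemma endgame {I1 E A B F N M s : ℝ} (hM : 0 < M) (hs : 0 < s)
    (hA0 : 0 ≤ A) (hB0 : 0 ≤ B) (hE0 : 0 ≤ E) (hN0 : 0 ≤ N) (hF0 : 0 ≤ F) (hI1nn : 0 ≤ I1)
    (star : A + B + E ≤ F + (2*M)^2*N)
    (c1 : s^2*I1 ≤ 2*M^2*N + 2*E) :
    s*Real.sqrt I1 + Real.sqrt E + Real.sqrt A + Real.sqrt B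
      ≤ (5+12*M)*(Real.sqrt F + Real.sqrt N) := by
  have bA := sqrt_bd hM.le hN0 (show A ≤ F + (2*M)^2*N by linarith) hF0
  have bB := sqrt_bd hM.le hN0 (show B ≤ F + (2*M)^2*N by linarith) hF0
  have bE := sqrt_bd hM.le hN0 (show E ≤ F + (2*M)^2*N by linarith) hF0
  have t1 : s*Real.sqrt I1 = Real.sqrt (s^2*I1) := by
    rw [Real.sqrt_mul (sq_nonneg s), Real.sqrt_sq hs.le]
  have t2 : Real.sqrt (s^2*I1) ≤ Real.sqrt (2*M^2*N + 2*E) := Real.sqrt_le_sqrt c1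
  have t3 : Real.sqrt (2*M^2*N + 2*E) ≤ Real.sqrt (2*M^2*N) + Real.sqrt (2*E) :=
    sqrt_add_le'' _ _ (by positivity) (by positivity)
  have t4 : Real.sqrt (2*M^2*N) ≤ 2*M*Real.sqrt N := by
    calc Real.sqrt (2*M^2*N) ≤ Real.sqrt ((2*M)^2*N) := Real.sqrt_le_sqrt (by nlinarith [sq_nonneg M])
      _ = 2*M*Real.sqrt N := by rw [Real.sqrt_mul (by positivity), Real.sqrt_sq (by positivity)]
  have t5 : Real.sqrt (2*E) ≤ 2*Real.sqrt E := by
    calc Real.sqrt (2*E) ≤ Real.sqrt (2^2*E) := Real.sqrt_le_sqrt (by nlinarith)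
      _ = 2*Real.sqrt E := by rw [Real.sqrt_mul (by positivity), Real.sqrt_sq (by norm_num)]
  have hSF := Real.sqrt_nonneg F
  have hSN := Real.sqrt_nonneg N
  nlinarith [bA, bB, bE, t1, t2, t3, t4, t5, mul_nonneg hM.le hSF, mul_nonneg hM.le hSN, hSF, hSN]

set_option maxHeartbeats 2000000 in
theorem stmt16 (M : ℝ) (hM : 0 < M) (W : ℝ → ℝ) (hW : ContDiff ℝ 1 W)
    (hWb : ∀ z, |W z| ≤ M) (hWb' : ∀ z, |deriv W z| ≤ M) :
    ∃ C > (0 : ℝ), ∀ n : ℕ, 1 ≤ n →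
      ∀ w : ℝ → ℂ, ContDiff ℝ (⊤ : ℕ∞) w → HasCompactSupport w →
        Real.sqrt (n : ℝ) *
            Real.sqrt (∫ z : ℝ,
              ‖deriv (fun t => ((W (t / Real.sqrt (n : ℝ)) : ℝ) : ℂ) * w t) z‖ ^ 2) +
          Real.sqrt (n : ℝ) *
            Real.sqrt (∫ z : ℝ,
              ‖((W (z / Real.sqrt (n : ℝ)) : ℝ) : ℂ) * deriv w z‖ ^ 2) +
          Real.sqrt (∫ z : ℝ, ‖iteratedDeriv 2 w z‖ ^ 2) +
          (n : ℝ) *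
            Real.sqrt (∫ z : ℝ,
              ‖(((W (z / Real.sqrt (n : ℝ))) ^ 2 : ℝ) : ℂ) * w z‖ ^ 2)
        ≤ C * (Real.sqrt (∫ z : ℝ,
              ‖-(iteratedDeriv 2 w z) +
                  (((n : ℝ) * (W (z / Real.sqrt (n : ℝ))) ^ 2 : ℝ) : ℂ) * w z‖ ^ 2) +
            Real.sqrt (∫ z : ℝ, ‖w z‖ ^ 2)) := by
  refine ⟨5 + 12*M, by linarith, ?_⟩
  intro n hn w hw hsupp
  have hn0 : (0:ℝ) < (n:ℝ) := by exact_mod_cast hn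
  set s := Real.sqrt (n : ℝ) with hs_def
  have hs : 0 < s := Real.sqrt_pos.2 hn0
  have hs2 : s^2 = (n:ℝ) := Real.sq_sqrt hn0.le
  -- regularity of w
  have hwD : Differentiable ℝ w := hw.differentiable (by norm_num)
  have hw1 : ContDiff ℝ (⊤ : ℕ∞) (deriv w) := (contDiff_infty_iff_deriv.mp (by exact_mod_cast hw)).2
  have hw1D : Differentiable ℝ (deriv w) := hw1.differentiable (by norm_num)
  have hwc : Continuous w := hw.continuous
  have hw1c : Continuous (deriv w) := hw1.continuous
  have hw2c : Continuous (deriv (deriv w)) := hw1.continuous_deriv (by norm_num)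
  have hsupp1 : HasCompactSupport (deriv w) := hsupp.deriv
  have hsupp2 : HasCompactSupport (deriv (deriv w)) := hsupp1.deriv
  -- W facts
  have hWD : Differentiable ℝ W := hW.differentiable one_ne_zero
  have hWc : Continuous W := hW.continuous
  have hW'c : Continuous (deriv W) := hW.continuous_deriv le_rfl
  have hiter : iteratedDeriv 2 w = deriv (deriv w) := by
    rw [iteratedDeriv_succ, iteratedDeriv_one]
  rw [hiter]
  -- pointwise derivative facts
  have hWn_deriv : ∀ z : ℝ, HasDerivAt (fun t => W (t/s)) (deriv W (z/s) * (1/s)) z := by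
    intro z
    simpa [Function.comp_def] using ((hWD (z/s)).hasDerivAt).comp z ((hasDerivAt_id z).div_const s)
  have hV_deriv : ∀ z : ℝ, HasDerivAt (fun t => (n:ℝ) * W (t/s) ^ 2)
      ((n:ℝ) * (2 * W (z/s) ^ 1 * (deriv W (z/s) * (1/s)))) z :=
    fun z => ((hWn_deriv z).pow 2).const_mul _
  -- continuity helpers
  have hcW : Continuous (fun z : ℝ => W (z/s)) := hWc.comp (continuous_id.div_const s)
  have hcW' : Continuous (fun z : ℝ => deriv W (z/s)) := hW'c.comp (continuous_id.div_const s)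
  -- integrability
  have int_fa : Integrable (fun z => ‖deriv (deriv w) z‖^2) :=
    integ_aux (by fun_prop) hsupp2 hsupp2 (fun z h1 _ => by simp [h1])
  have int_fb : Integrable (fun z => ((n:ℝ) * W (z/s)^2)^2 * ‖w z‖^2) :=
    integ_aux (by fun_prop) hsupp hsupp (fun z h1 _ => by simp [h1])
  have int_fc : Integrable (fun z => ((n:ℝ) * W (z/s)^2) * ((deriv (deriv w) z) * (starRingEnd ℂ) (w z)).re) :=
    integ_aux (by fun_prop) hsupp hsupp (fun z h1 _ => by simp [h1])
  have int_fd : Integrable (fun z => ((n:ℝ) * (2 * W (z/s) ^ 1 * (deriv W (z/s) * (1/s)))) * ((deriv w z) * (starRingEnd ℂ) (w z)).re) :=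
    integ_aux (by fun_prop) hsupp hsupp (fun z h1 _ => by simp [h1])
  have int_fe : Integrable (fun z => ((n:ℝ) * W (z/s)^2) * ‖deriv w z‖^2) :=
    integ_aux (by fun_prop) hsupp1 hsupp1 (fun z h1 _ => by simp [h1])
  have int_N : Integrable (fun z => ‖w z‖^2) :=
    integ_aux (by fun_prop) hsupp hsupp (fun z h1 _ => by simp [h1])
  have int_h : Integrable (fun z => ((n:ℝ) * W (z/s)^2) * ((deriv w z) * (starRingEnd ℂ) (w z)).re) :=
    integ_aux (by fun_prop) hsupp hsupp (fun z h1 _ => by simp [h1])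
  have int_W2w1 : Integrable (fun z => (W (z/s))^2 * ‖deriv w z‖^2) :=
    integ_aux (by fun_prop) hsupp1 hsupp1 (fun z h1 _ => by simp [h1])
  have int_T1main : Integrable (fun z => ‖((deriv W (z/s) * (1/s) : ℝ) : ℂ) * w z + ((W (z/s) : ℝ) : ℂ) * deriv w z‖^2) :=
    integ_aux (by fun_prop) hsupp hsupp1 (fun z h1 h2 => by simp [h1, h2])
  have int_W4w : Integrable (fun z => ‖((W (z/s)^2 : ℝ) : ℂ) * w z‖^2) :=
    integ_aux (by fun_prop) hsupp hsupp (fun z h1 _ => by simp [h1])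
  have int_Ww1 : Integrable (fun z => ‖((W (z/s) : ℝ) : ℂ) * deriv w z‖^2) :=
    integ_aux (by fun_prop) hsupp1 hsupp1 (fun z h1 _ => by simp [h1])
  have int_F : Integrable (fun z => ‖-(deriv (deriv w) z) + (((n:ℝ) * W (z/s)^2 : ℝ) : ℂ) * w z‖^2) :=
    integ_aux (by fun_prop) hsupp hsupp2 (fun z h1 h2 => by simp [h1, h2])
  -- integration by parts identity
  have key0 : (∫ z : ℝ, (((n:ℝ) * (2 * W (z/s) ^ 1 * (deriv W (z/s) * (1/s)))) * ((deriv w z) * (starRingEnd ℂ) (w z)).re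
      + (((n:ℝ) * W (z/s)^2) * ((deriv (deriv w) z) * (starRingEnd ℂ) (w z)).re
        + ((n:ℝ) * W (z/s)^2) * ‖deriv w z‖^2))) = 0 := by
    apply integral_eq_zero_of_hasDerivAt_of_integrable
      (f := fun z => ((n:ℝ) * W (z/s)^2) * ((deriv w z) * (starRingEnd ℂ) (w z)).re)
    · intro z
      have hp : HasDerivAt (fun t => ((deriv w t) * (starRingEnd ℂ) (w t)).re)
          ((deriv (deriv w) z * (starRingEnd ℂ) (w z) + deriv w z * (starRingEnd ℂ) (deriv w z)).re) z :=
        Complex.reCLM.hasFDerivAt.comp_hasDerivAt z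
          (((hw1D z).hasDerivAt).mul ((hwD z).hasDerivAt.star))
      have h0 : HasDerivAt (fun z => ((n:ℝ) * W (z/s)^2) * ((deriv w z) * (starRingEnd ℂ) (w z)).re) _ z :=
        (hV_deriv z).mul hp
      refine h0.congr_deriv ?_
      have hre : (deriv w z * (starRingEnd ℂ) (deriv w z)).re = ‖deriv w z‖^2 := by
        rw [Complex.mul_conj]
        simp [Complex.normSq_eq_norm_sq, ← Complex.ofReal_pow]
      simp only [Complex.add_re, hre]
      ring
    · exact int_fd.add (int_fc.add int_fe)
    · exact int_h
  have int_ce : Integrable (fun z : ℝ => ((n:ℝ) * W (z/s)^2) * ((deriv (deriv w) z) * (starRingEnd ℂ) (w z)).re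
      + ((n:ℝ) * W (z/s)^2) * ‖deriv w z‖^2) := int_fc.add int_fe
  have key1 : (∫ z : ℝ, ((n:ℝ) * (2 * W (z/s) ^ 1 * (deriv W (z/s) * (1/s)))) * ((deriv w z) * (starRingEnd ℂ) (w z)).re)
      + ((∫ z : ℝ, ((n:ℝ) * W (z/s)^2) * ((deriv (deriv w) z) * (starRingEnd ℂ) (w z)).re)
        + (∫ z : ℝ, ((n:ℝ) * W (z/s)^2) * ‖deriv w z‖^2)) = 0 := by
    have e2 := integral_add int_fc int_fe
    have e1 := integral_add int_fd int_ce
    rw [← e2, ← e1]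
    exact key0
  -- energy identity for F
  have hFeq : (∫ z : ℝ, ‖-(deriv (deriv w) z) + (((n:ℝ) * W (z/s)^2 : ℝ) : ℂ) * w z‖^2)
      = (∫ z : ℝ, ‖deriv (deriv w) z‖^2)
        + ((∫ z : ℝ, ((n:ℝ) * W (z/s)^2)^2 * ‖w z‖^2)
          + (-2) * (∫ z : ℝ, ((n:ℝ) * W (z/s)^2) * ((deriv (deriv w) z) * (starRingEnd ℂ) (w z)).re)) := by
    have int_c2 : Integrable (fun z : ℝ => (-2:ℝ) * (((n:ℝ) * W (z/s)^2) * ((deriv (deriv w) z) * (starRingEnd ℂ) (w z)).re)) :=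
      int_fc.const_mul _
    have int_bc : Integrable (fun z : ℝ => ((n:ℝ) * W (z/s)^2)^2 * ‖w z‖^2
        + (-2:ℝ) * (((n:ℝ) * W (z/s)^2) * ((deriv (deriv w) z) * (starRingEnd ℂ) (w z)).re)) := int_fb.add int_c2
    have e1 := integral_add int_fa int_bc
    have e2 := integral_add int_fb int_c2
    have e3 := integral_const_mul (μ := volume) (-2:ℝ) (fun z : ℝ => ((n:ℝ) * W (z/s)^2) * ((deriv (deriv w) z) * (starRingEnd ℂ) (w z)).re)
    have e0 : (∫ z : ℝ, ‖-(deriv (deriv w) z) + (((n:ℝ) * W (z/s)^2 : ℝ) : ℂ) * w z‖^2)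
        = ∫ z : ℝ, (‖deriv (deriv w) z‖^2 + (((n:ℝ) * W (z/s)^2)^2 * ‖w z‖^2
          + (-2:ℝ) * (((n:ℝ) * W (z/s)^2) * ((deriv (deriv w) z) * (starRingEnd ℂ) (w z)).re))) := by
      congr 1
      funext z
      exact norm_expand' (deriv (deriv w) z) (w z) ((n:ℝ) * W (z/s)^2)
    rw [e0, e1, e2, e3]
  -- pointwise bound on the commutator term
  have hptd : ∀ z : ℝ, (-2:ℝ) * (((n:ℝ) * (2 * W (z/s) ^ 1 * (deriv W (z/s) * (1/s)))) * ((deriv w z) * (starRingEnd ℂ) (w z)).re)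
      ≤ ((n:ℝ) * W (z/s)^2) * ‖deriv w z‖^2 + (2*M)^2 * ‖w z‖^2 := by
    intro z
    have h2 : |((deriv w z) * (starRingEnd ℂ) (w z)).re| ≤ ‖deriv w z‖ * ‖w z‖ := by
      refine (Complex.abs_re_le_norm _).trans ?_
      rw [norm_mul]
      simp [Complex.norm_conj]
    rw [← hs2]
    have := ptwise_bound (a := W (z/s)) (r := ((deriv w z) * (starRingEnd ℂ) (w z)).re)
      (u := ‖deriv w z‖) (v := ‖w z‖) hs hM (hWb' (z/s)) h2 (norm_nonneg _) (norm_nonneg _)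
    calc (-2:ℝ) * ((s^2) * (2 * W (z/s) ^ 1 * (deriv W (z/s) * (1/s))) * ((deriv w z) * (starRingEnd ℂ) (w z)).re)
        = (-2) * ((s^2) * (2 * W (z/s) ^ 1 * (deriv W (z/s) * (1/s)))) * ((deriv w z) * (starRingEnd ℂ) (w z)).re := by ring
      _ ≤ s^2 * (W (z/s))^2 * ‖deriv w z‖^2 + (2*M)^2 * ‖w z‖^2 := this
      _ = s^2 * (W (z/s))^2 * ‖deriv w z‖^2 + (2*M)^2 * ‖w z‖^2 := rfl
  have hd_int_le : (∫ z : ℝ, (-2:ℝ) * (((n:ℝ) * (2 * W (z/s) ^ 1 * (deriv W (z/s) * (1/s)))) * ((deriv w z) * (starRingEnd ℂ) (w z)).re))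
      ≤ ∫ z : ℝ, (((n:ℝ) * W (z/s)^2) * ‖deriv w z‖^2 + (2*M)^2 * ‖w z‖^2) :=
    integral_mono (int_fd.const_mul _) (int_fe.add (int_N.const_mul _)) hptd
  have q1 := integral_const_mul (μ := volume) (-2:ℝ)
    (fun z : ℝ => ((n:ℝ) * (2 * W (z/s) ^ 1 * (deriv W (z/s) * (1/s)))) * ((deriv w z) * (starRingEnd ℂ) (w z)).re)
  have q2 := integral_add int_fe (int_N.const_mul ((2*M)^2))
  have q3 := integral_const_mul (μ := volume) ((2*M)^2) (fun z : ℝ => ‖w z‖^2)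
  have hd2 : (-2:ℝ) * (∫ z : ℝ, ((n:ℝ) * (2 * W (z/s) ^ 1 * (deriv W (z/s) * (1/s)))) * ((deriv w z) * (starRingEnd ℂ) (w z)).re)
      ≤ (∫ z : ℝ, ((n:ℝ) * W (z/s)^2) * ‖deriv w z‖^2) + (2*M)^2 * (∫ z : ℝ, ‖w z‖^2) := by
    rw [← q1, ← q3]
    calc _ ≤ _ := hd_int_le
      _ = _ := q2
  -- the key a priori estimate
  have star : (∫ z : ℝ, ‖deriv (deriv w) z‖^2) + (∫ z : ℝ, ((n:ℝ) * W (z/s)^2)^2 * ‖w z‖^2)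
        + (∫ z : ℝ, ((n:ℝ) * W (z/s)^2) * ‖deriv w z‖^2)
      ≤ (∫ z : ℝ, ‖-(deriv (deriv w) z) + (((n:ℝ) * W (z/s)^2 : ℝ) : ℂ) * w z‖^2)
        + (2*M)^2 * (∫ z : ℝ, ‖w z‖^2) := by
    linarith [hFeq, key1, hd2]
  have hA0 : (0:ℝ) ≤ ∫ z : ℝ, ‖deriv (deriv w) z‖^2 := integral_nonneg (fun z => by positivity)
  have hB0 : (0:ℝ) ≤ ∫ z : ℝ, ((n:ℝ) * W (z/s)^2)^2 * ‖w z‖^2 := integral_nonneg (fun z => by positivity)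
  have hE0 : (0:ℝ) ≤ ∫ z : ℝ, ((n:ℝ) * W (z/s)^2) * ‖deriv w z‖^2 := integral_nonneg (fun z => by positivity)
  have hN0 : (0:ℝ) ≤ ∫ z : ℝ, ‖w z‖^2 := integral_nonneg (fun z => by positivity)
  have hF0 : (0:ℝ) ≤ ∫ z : ℝ, ‖-(deriv (deriv w) z) + (((n:ℝ) * W (z/s)^2 : ℝ) : ℂ) * w z‖^2 :=
    integral_nonneg (fun z => by positivity)
  -- term 4 relation
  have hBrel : (∫ z : ℝ, ((n:ℝ) * W (z/s)^2)^2 * ‖w z‖^2)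
      = (n:ℝ)^2 * ∫ z : ℝ, ‖((W (z/s)^2 : ℝ) : ℂ) * w z‖^2 := by
    rw [← integral_const_mul (μ := volume) ((n:ℝ)^2) (fun z : ℝ => ‖((W (z/s)^2 : ℝ) : ℂ) * w z‖^2)]
    congr 1
    funext z
    rw [norm_ofReal_mul_sq]
    ring
  have heq4 : (n:ℝ) * Real.sqrt (∫ z : ℝ, ‖((W (z/s)^2 : ℝ) : ℂ) * w z‖^2)
      = Real.sqrt (∫ z : ℝ, ((n:ℝ) * W (z/s)^2)^2 * ‖w z‖^2) := by
    rw [hBrel, Real.sqrt_mul (by positivity), Real.sqrt_sq hn0.le]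
  -- term 2 relation
  have hErel : (∫ z : ℝ, ((n:ℝ) * W (z/s)^2) * ‖deriv w z‖^2)
      = (n:ℝ) * ∫ z : ℝ, ‖((W (z/s) : ℝ) : ℂ) * deriv w z‖^2 := by
    rw [← integral_const_mul (μ := volume) ((n:ℝ)) (fun z : ℝ => ‖((W (z/s) : ℝ) : ℂ) * deriv w z‖^2)]
    congr 1
    funext z
    rw [norm_ofReal_mul_sq]
    ring
  have hT2eq : s * Real.sqrt (∫ z : ℝ, ‖((W (z/s) : ℝ) : ℂ) * deriv w z‖^2)
      = Real.sqrt (∫ z : ℝ, ((n:ℝ) * W (z/s)^2) * ‖deriv w z‖^2) := by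
    rw [hErel, ← hs2, Real.sqrt_mul (sq_nonneg s), Real.sqrt_sq hs.le]
  -- term 1 : rewrite the derivative and bound
  have hder : ∀ z : ℝ, deriv (fun t => ((W (t/s) : ℝ) : ℂ) * w t) z
      = ((deriv W (z/s) * (1/s) : ℝ) : ℂ) * w z + ((W (z/s) : ℝ) : ℂ) * deriv w z :=
    fun z => ((hWn_deriv z).ofReal_comp.mul ((hwD z).hasDerivAt)).deriv
  have hI1eq : (∫ z : ℝ, ‖deriv (fun t => ((W (t/s) : ℝ) : ℂ) * w t) z‖^2)
      = ∫ z : ℝ, ‖((deriv W (z/s) * (1/s) : ℝ) : ℂ) * w z + ((W (z/s) : ℝ) : ℂ) * deriv w z‖^2 := by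
    congr 1
    funext z
    rw [hder z]
  have hpt1 : ∀ z : ℝ, ‖((deriv W (z/s) * (1/s) : ℝ) : ℂ) * w z + ((W (z/s) : ℝ) : ℂ) * deriv w z‖^2
      ≤ (2*(M^2*(1/s)^2)) * ‖w z‖^2 + 2 * (W (z/s)^2 * ‖deriv w z‖^2) := by
    intro z
    have g3 := norm_add_sq_le' (((deriv W (z/s) * (1/s) : ℝ) : ℂ) * w z) (((W (z/s) : ℝ) : ℂ) * deriv w z)
    rw [norm_ofReal_mul_sq, norm_ofReal_mul_sq] at g3
    have g4 : (deriv W (z/s) * (1/s))^2 ≤ M^2*(1/s)^2 := by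
      have h := hWb' (z/s)
      have h2 : (deriv W (z/s))^2 ≤ M^2 := by
        nlinarith [sq_abs (deriv W (z/s)), abs_nonneg (deriv W (z/s))]
      rw [mul_pow]
      exact mul_le_mul_of_nonneg_right h2 (by positivity)
    nlinarith [g3, g4, sq_nonneg ‖w z‖]
  have int_rhs1 : Integrable (fun z : ℝ => (2*(M^2*(1/s)^2)) * ‖w z‖^2 + 2 * (W (z/s)^2 * ‖deriv w z‖^2)) :=
    (int_N.const_mul _).add (int_W2w1.const_mul 2)
  have r1 : (∫ z : ℝ, ‖((deriv W (z/s) * (1/s) : ℝ) : ℂ) * w z + ((W (z/s) : ℝ) : ℂ) * deriv w z‖^2)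
      ≤ ∫ z : ℝ, ((2*(M^2*(1/s)^2)) * ‖w z‖^2 + 2 * (W (z/s)^2 * ‖deriv w z‖^2)) :=
    integral_mono int_T1main int_rhs1 hpt1
  have rsplit : (∫ z : ℝ, ((2*(M^2*(1/s)^2)) * ‖w z‖^2 + 2 * (W (z/s)^2 * ‖deriv w z‖^2)))
      = (2*(M^2*(1/s)^2)) * (∫ z : ℝ, ‖w z‖^2) + 2 * (∫ z : ℝ, W (z/s)^2 * ‖deriv w z‖^2) := by
    rw [integral_add (int_N.const_mul _) (int_W2w1.const_mul 2),
      integral_const_mul (μ := volume), integral_const_mul (μ := volume)]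
  have hXrel : (∫ z : ℝ, ((n:ℝ) * W (z/s)^2) * ‖deriv w z‖^2)
      = (n:ℝ) * ∫ z : ℝ, W (z/s)^2 * ‖deriv w z‖^2 := by
    rw [← integral_const_mul (μ := volume) ((n:ℝ)) (fun z : ℝ => W (z/s)^2 * ‖deriv w z‖^2)]
    congr 1
    funext z
    ring
  have c1 : s^2 * (∫ z : ℝ, ‖deriv (fun t => ((W (t/s) : ℝ) : ℂ) * w t) z‖^2)
      ≤ 2*M^2*(∫ z : ℝ, ‖w z‖^2) + 2*(∫ z : ℝ, ((n:ℝ) * W (z/s)^2) * ‖deriv w z‖^2) := by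
    have r2 : s^2 * (∫ z : ℝ, ‖deriv (fun t => ((W (t/s) : ℝ) : ℂ) * w t) z‖^2)
        ≤ s^2 * ((2*(M^2*(1/s)^2)) * (∫ z : ℝ, ‖w z‖^2) + 2 * (∫ z : ℝ, W (z/s)^2 * ‖deriv w z‖^2)) := by
      rw [hI1eq]
      exact mul_le_mul_of_nonneg_left (r1.trans rsplit.le) (sq_nonneg s)
    have r3 : s^2 * ((2*(M^2*(1/s)^2)) * (∫ z : ℝ, ‖w z‖^2) + 2 * (∫ z : ℝ, W (z/s)^2 * ‖deriv w z‖^2))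
        = 2*M^2*(∫ z : ℝ, ‖w z‖^2) + 2*((n:ℝ) * (∫ z : ℝ, W (z/s)^2 * ‖deriv w z‖^2)) := by
      rw [← hs2]
      field_simp
    rw [r3] at r2
    rw [hXrel]
    exact r2
  have hI1nn : (0:ℝ) ≤ ∫ z : ℝ, ‖deriv (fun t => ((W (t/s) : ℝ) : ℂ) * w t) z‖^2 :=
    integral_nonneg (fun z => by positivity)
  rw [heq4, hT2eq]
  exact endgame hM hs hA0 hB0 hE0 hN0 hF0 hI1nn star c1
end
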